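/- Let N be a G-set, f : N → L a map, h : L → G with h(g·l) = g h(l), and set α(w) = (h(f(w)))⁻¹ ∈ G. Suppose α(w)·w = w for all w ∈ N (i.e. α(w) ∈ Stab(w)) and α(g·w) = g α(w) g⁻¹ for all g ∈ G, w ∈ N. Then for every n ≥ 1, the operator t_n on G^n × N defined (after the identification [*, g₁,…,g_{n+1}, w] ↔ (g₂,…,g_{n+1}, w) with g₁ = 1) by the cyclic formula t_n(g₁,…,g_{n+1},w) = (h(u), h(u)⁻¹·(g₁,…,g_n), g_{n+1}·w) with u = g₁⋯g_{n+1}·f(w), satisfies t_n^{n+1} = id. Conversely, if t₁² = id (on orbit classes, with L faithful), then α(w) ∈ Stab(w) and α(g·w) = g α(w) g⁻¹. -/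

import Mathlib

/-- The induced cyclic operator on `G^{m+1} × N` (the orbit classes of the
`(m+1)`-simplices under the identification `[*, g₁, …, g_{m+2}, w] ↦ (g₂, …, g_{m+2}, w)`):
`(a₁, …, a_{m+1}, w) ↦ ((h((a₁⋯a_{m+1}) • f w))⁻¹, a₁, …, a_m, a_{m+1} • w)`. -/
def cyclicT (G N L : Type*) [Group G] [MulAction G L] [MulAction G N]
    (h : L → G) (f : N → L) (m : ℕ) :
    ((Fin (m + 1) → G) × N) → ((Fin (m + 1) → G) × N) :=
  fun p =>
    (Fin.cons (h ((List.ofFn p.1).prod • f p.2))⁻¹ (Fin.init p.1),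
     p.1 (Fin.last m) • p.2)

namespace Stmt17Aux

open Fin.NatCast

lemma fin_succ_sub_one {n : ℕ} (i : Fin (n + 1)) : i.succ - 1 = i.castSucc := by
  apply Fin.ext
  rw [Fin.sub_def]
  simp only [Fin.val_one, Fin.val_succ, Fin.coe_castSucc]
  have h1 : n + 1 + 1 - 1 + (i.val + 1) = (n + 1 + 1) + i.val := by omega
  rw [h1, Nat.add_mod_left, Nat.mod_eq_of_lt (by omega)]

lemma fin_zero_sub_one {n : ℕ} : (0 : Fin (n + 2)) - 1 = Fin.last (n + 1) := by
  apply Fin.ext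
  rw [Fin.sub_def]
  simp only [Fin.val_one, Fin.val_zero, Fin.val_last]
  rw [Nat.add_zero, Nat.mod_eq_of_lt (by omega)]
  omega

lemma fin_sub_sub {m : ℕ} (i : Fin (m + 2)) (k : ℕ) :
    i - 1 - (k : Fin (m + 2)) = i - ((k + 1 : ℕ) : Fin (m + 2)) := by
  push_cast
  rw [sub_sub]
  rw [add_comm (1 : Fin (m + 2))]

lemma fin_last_sub {m : ℕ} (k : ℕ) (hk : k ≤ m) :
    Fin.last (m + 1) - ((k + 1 : ℕ) : Fin (m + 2)) =
      Fin.castSucc (⟨m - k, by omega⟩ : Fin (m + 1)) := by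
  apply Fin.ext
  rw [Fin.sub_def]
  simp only [Fin.val_last, Fin.val_natCast, Fin.coe_castSucc]
  rw [Nat.mod_eq_of_lt (show k + 1 < m + 2 by omega)]
  have h1 : m + 2 - (k + 1) + (m + 1) = (m + 2) + (m - k) := by omega
  rw [h1, Nat.add_mod_left, Nat.mod_eq_of_lt (by omega)]

variable {G N L : Type*} [Group G] [MulAction G L] [MulAction G N]

def psi (h : L → G) (f : N → L) (m : ℕ) (p : (Fin (m + 1) → G) × N) :
    (Fin (m + 2) → G) × N :=
  (Fin.snoc p.1 ((h (f p.2))⁻¹ * ((List.ofFn p.1).prod)⁻¹), p.2)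

def rot (m : ℕ) (q : (Fin (m + 2) → G) × N) : (Fin (m + 2) → G) × N :=
  (fun i => q.1 (i - 1), q.1 (Fin.last (m + 1) - 1) • q.2)

def Mk (m : ℕ) : ℕ → (Fin (m + 2) → G) → G
  | 0, _ => 1
  | (k + 1), v => v (Fin.last (m + 1) - ((k + 1 : ℕ) : Fin (m + 2))) * Mk m k v

lemma psi_inj (h : L → G) (f : N → L) (m : ℕ) :
    Function.Injective (psi (G := G) h f m) := by
  intro p q e
  unfold psi at e
  rw [Prod.mk.injEq] at e
  obtain ⟨e1', e2⟩ := e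
  have e1 : p.1 = q.1 := by
    funext j
    have := congrFun e1' (Fin.castSucc j)
    simpa [Fin.snoc_castSucc] using this
  exact Prod.ext e1 e2

lemma prod_ofFn_snoc (m : ℕ) (a : Fin (m + 1) → G) :
    (List.ofFn a).prod = (List.ofFn (Fin.init a)).prod * a (Fin.last m) := by
  rw [List.ofFn_succ', List.prod_concat]
  rfl

lemma conj (h : L → G) (hh : ∀ (g : G) (l : L), h (g • l) = g * h l) (f : N → L)
    (H2 : ∀ (g : G) (w : N), (h (f (g • w)))⁻¹ = g * (h (f w))⁻¹ * g⁻¹)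
    (m : ℕ) (p : (Fin (m + 1) → G) × N) :
    psi h f m (cyclicT G N L h f m p) = rot m (psi h f m p) := by
  obtain ⟨a, w⟩ := p
  set α := (h (f w))⁻¹ with hα
  set P := (List.ofFn a).prod with hP
  have hB : (h (P • f w))⁻¹ = α * P⁻¹ := by rw [hh, mul_inv_rev, hα]
  have hPsplit : P = (List.ofFn (Fin.init a)).prod * a (Fin.last m) :=
    prod_ofFn_snoc m a
  have hprodcons :
      (List.ofFn (Fin.cons (h (P • f w))⁻¹ (Fin.init a) : Fin (m + 1) → G)).prod
        = (α * P⁻¹) * (List.ofFn (Fin.init a)).prod := by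
    rw [List.ofFn_succ]
    simp [hB]
  have hC : (h (f (a (Fin.last m) • w)))⁻¹ *
      ((List.ofFn (Fin.cons (h (P • f w))⁻¹ (Fin.init a) : Fin (m + 1) → G)).prod)⁻¹
        = a (Fin.last m) := by
    rw [hprodcons, H2, hα]
    rw [hPsplit]
    group
  have hlast : Fin.last (m + 1) - 1 = Fin.castSucc (Fin.last m) := by
    rw [← Fin.succ_last, fin_succ_sub_one]
  unfold cyclicT rot psi
  simp only
  refine Prod.ext ?_ ?_
  · funext i
    induction i using Fin.lastCases with
    | last =>
      simp only [Fin.snoc_last, hlast, Fin.snoc_castSucc]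
      exact hC
    | cast j =>
      simp only [Fin.snoc_castSucc]
      induction j using Fin.cases with
      | zero =>
        simp only [Fin.cons_zero, Fin.castSucc_zero, fin_zero_sub_one, Fin.snoc_last]
        rw [hB, hα, hP]
      | succ i' =>
        simp only [Fin.cons_succ]
        rw [← Fin.succ_castSucc, fin_succ_sub_one, Fin.snoc_castSucc]
        rfl
  · simp only [hlast, Fin.snoc_castSucc]

lemma rot_iter (m : ℕ) (k : ℕ) (v : Fin (m + 2) → G) (w : N) :
    (rot m)^[k] (v, w) = (fun i => v (i - (k : Fin (m + 2))), Mk m k v • w) := by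
  induction k with
  | zero => simp [Mk]
  | succ k ih =>
    rw [Function.iterate_succ_apply', ih]
    unfold rot
    refine Prod.ext ?_ ?_
    · funext i
      simp only
      rw [fin_sub_sub]
    · simp only [Mk, smul_smul]
      rw [fin_sub_sub]

lemma Mk_snoc (m : ℕ) (a : Fin (m + 1) → G) (b : G) :
    ∀ k, k ≤ m + 1 → Mk m k (Fin.snoc a b) = ((List.ofFn a).drop (m + 1 - k)).prod
  | 0, _ => by
    show (1 : G) = _
    rw [Nat.sub_zero, List.drop_eq_nil_of_le (by simp), List.prod_nil]
  | (k + 1), hk => by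
    have hk' : k ≤ m := by omega
    rw [Mk, Mk_snoc m a b k (by omega), fin_last_sub k hk', Fin.snoc_castSucc]
    have hlen : m - k < (List.ofFn a).length := by simp
    rw [show m + 1 - (k + 1) = m - k by omega, List.drop_eq_getElem_cons hlen,
      List.prod_cons, List.getElem_ofFn, show m - k + 1 = m + 1 - k by omega]

end Stmt17Aux

open Stmt17Aux
open Fin.NatCast

/-- with `α(w) = (h(f w))⁻¹`, if `α(w) ∈ Stab(w)` and
`α(g•w) = g α(w) g⁻¹` then the duplicial operator `t_n` is cyclic
(`t_n^{n+1} = id` for every `n ≥ 1`); conversely (with `L` faithful) if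
`t₁² = id` then both conditions hold. -/
theorem stmt17 (G N L : Type*) [Group G] [MulAction G L] [MulAction G N]
    [FaithfulSMul G L]
    (h : L → G) (hh : ∀ (g : G) (l : L), h (g • l) = g * h l) (f : N → L) :
    (((∀ w : N, (h (f w))⁻¹ • w = w)
        ∧ (∀ (g : G) (w : N), (h (f (g • w)))⁻¹ = g * (h (f w))⁻¹ * g⁻¹)) →
      ∀ m : ℕ, (cyclicT G N L h f m)^[m + 2] = id)
    ∧ ((cyclicT G N L h f 0)^[2] = id →
      (∀ w : N, (h (f w))⁻¹ • w = w)
        ∧ (∀ (g : G) (w : N), (h (f (g • w)))⁻¹ = g * (h (f w))⁻¹ * g⁻¹)) := by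
  constructor
  · rintro ⟨H1, H2⟩ m
    funext p
    have key : ∀ k, psi h f m ((cyclicT G N L h f m)^[k] p)
        = (rot m)^[k] (psi h f m p) := by
      intro k
      induction k with
      | zero => rfl
      | succ k ih =>
        rw [Function.iterate_succ_apply', Function.iterate_succ_apply',
          conj h hh f H2, ih]
    have hkey := key (m + 2)
    obtain ⟨a, w⟩ := p
    have hpsi1 : (psi (G := G) h f m (a, w)).1
        = Fin.snoc a ((h (f w))⁻¹ * ((List.ofFn a).prod)⁻¹) := rfl
    rw [show psi (G := G) h f m (a, w)
        = (Fin.snoc a ((h (f w))⁻¹ * ((List.ofFn a).prod)⁻¹), w) from rfl,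
      rot_iter] at hkey
    have hMfull : Mk m (m + 2)
        (Fin.snoc a ((h (f w))⁻¹ * ((List.ofFn a).prod)⁻¹)) = (h (f w))⁻¹ := by
      rw [Mk, Mk_snoc m _ _ (m + 1) le_rfl]
      simp only [Nat.sub_self, List.drop_zero, Nat.cast_ofNat]
      rw [show ((m + 2 : ℕ) : Fin (m + 2)) = 0 from Fin.natCast_self _, sub_zero,
        Fin.snoc_last]
      group
    rw [show ((m + 2 : ℕ) : Fin (m + 2)) = 0 from Fin.natCast_self _] at hkey
    simp only [sub_zero] at hkey
    rw [hMfull, H1] at hkey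
    apply psi_inj h f m
    exact hkey
  · intro H
    have prod1 : ∀ (c : Fin 1 → G), (List.ofFn c).prod = c 0 := by
      intro c; simp [List.ofFn_succ]
    have key : ∀ (g : G) (w : N),
        ((h (f (g • w)))⁻¹ * ((h (f w))⁻¹ * g⁻¹)⁻¹ = g) ∧
        (((h (f w))⁻¹ * g⁻¹) • g • w = w) := by
      intro g w
      have step1 : cyclicT G N L h f 0 (fun _ => g, w)
          = (fun _ => (h (f w))⁻¹ * g⁻¹, g • w) := by
        unfold cyclicT
        refine Prod.ext (funext fun i => ?_) rfl
        rw [Fin.eq_zero i]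
        simp only [Fin.cons_zero]
        rw [prod1]
        simp only [hh, mul_inv_rev]
      have step2 : cyclicT G N L h f 0 (fun _ => (h (f w))⁻¹ * g⁻¹, g • w)
          = (fun _ => (h (f (g • w)))⁻¹ * ((h (f w))⁻¹ * g⁻¹)⁻¹,
              ((h (f w))⁻¹ * g⁻¹) • g • w) := by
        unfold cyclicT
        refine Prod.ext (funext fun i => ?_) rfl
        rw [Fin.eq_zero i]
        simp only [Fin.cons_zero]
        rw [prod1]
        simp only [hh, mul_inv_rev]
      have Hp := congrFun H (fun _ => g, w)
      rw [show ((cyclicT G N L h f 0)^[2] (fun _ => g, w))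
          = cyclicT G N L h f 0 (cyclicT G N L h f 0 (fun _ => g, w)) from rfl,
        step1, step2] at Hp
      exact ⟨congrFun (congrArg Prod.fst Hp) 0, congrArg Prod.snd Hp⟩
    constructor
    · intro w
      have := (key 1 w).2
      simpa using this
    · intro g w
      have h1 := (key g w).1
      calc (h (f (g • w)))⁻¹
          = ((h (f (g • w)))⁻¹ * ((h (f w))⁻¹ * g⁻¹)⁻¹) * ((h (f w))⁻¹ * g⁻¹) := by
            group
        _ = g * ((h (f w))⁻¹ * g⁻¹) := by rw [h1]
        _ = g * (h (f w))⁻¹ * g⁻¹ := by rw [mul_assoc]
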